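/- There exists a continuous convex piecewise quadratic function φ on an interval, with quadratic segments φ_1,...,φ_s, such that φ(x) ≠ max_{1<=i<=s} φ_i(x) for some x in the domain. Concretely, for φ defined on [-5/3, 5/3] by φ(x) = 11x^2 + 12x + 6 on [-5/3,-1], φ(x) = 5x^2 on [-1,1], φ(x) = 11x^2 - 12x + 6 on [1, 5/3], one has φ(0) = 0 < max{φ_1(0), φ_2(0), φ_3(0)} = 6. -/

import Mathlib

open Set

/-- The concrete piecewise quadratic function from the example. -/
noncomputable def phiEx (x : ℝ) : ℝ :=
  if x ≤ -1 then 11 * x ^ 2 + 12 * x + 6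
  else if x ≤ 1 then 5 * x ^ 2
  else 11 * x ^ 2 - 12 * x + 6

lemma phiEx_eq : phiEx = fun x => 5 * x ^ 2 + 6 * (max (|x| - 1) 0) ^ 2 := by
  funext x
  unfold phiEx
  rcases le_or_gt x (-1) with h | h
  · rw [if_pos h, abs_of_nonpos (by linarith), max_eq_left (by linarith)]
    ring
  · rw [if_neg (by linarith)]
    rcases le_or_gt x 1 with h2 | h2
    · rw [if_pos h2, max_eq_right (by rw [sub_nonpos]; exact abs_le.2 ⟨by linarith, h2⟩)]
      ring
    · rw [if_neg (by linarith), abs_of_pos (by linarith), max_eq_left (by linarith)]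
      ring

lemma phiEx_convex : ConvexOn ℝ univ phiEx := by
  rw [phiEx_eq]
  have habs : ConvexOn ℝ univ (fun x : ℝ => |x| - 1) := by
    simpa [Real.norm_eq_abs, Pi.sub_def] using (convexOn_univ_norm (E := ℝ)).sub (concaveOn_const 1 convex_univ)
  have hmax : ConvexOn ℝ univ (fun x : ℝ => max (|x| - 1) 0) :=
    habs.sup (convexOn_const 0 convex_univ)
  have hsq : ConvexOn ℝ univ (fun x : ℝ => (max (|x| - 1) 0) ^ 2) := by
    refine ⟨convex_univ, fun x _ y _ a b ha hb hab => ?_⟩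
    have h1 := hmax.2 (mem_univ x) (mem_univ y) ha hb hab
    have hu : (0:ℝ) ≤ max (|x| - 1) 0 := le_max_right _ _
    have hv : (0:ℝ) ≤ max (|y| - 1) 0 := le_max_right _ _
    have hz : (0:ℝ) ≤ max (|a • x + b • y| - 1) 0 := le_max_right _ _
    simp only [smul_eq_mul] at *
    nlinarith [sq_nonneg (max (|x| - 1) 0 - max (|y| - 1) 0), mul_nonneg ha hb]
  have h5 : ConvexOn ℝ univ (fun x : ℝ => 5 * x ^ 2) := by
    have := (Even.convexOn_pow (even_two)).smul (by norm_num : (0:ℝ) ≤ 5)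
    simpa [smul_eq_mul] using this
  have h6 := hsq.smul (by norm_num : (0:ℝ) ≤ 6)
  simpa [smul_eq_mul, Pi.add_def] using h5.add h6

lemma phiEx_cont : Continuous phiEx := by
  rw [phiEx_eq]
  continuity

theorem pwq_max_representation_fails :
    -- φ agrees with the three quadratic segments on their intervals
    (∀ x ∈ Icc (-(5:ℝ)/3) (-1), phiEx x = 11 * x ^ 2 + 12 * x + 6) ∧
    (∀ x ∈ Icc (-(1:ℝ)) 1, phiEx x = 5 * x ^ 2) ∧
    (∀ x ∈ Icc (1:ℝ) (5/3), phiEx x = 11 * x ^ 2 - 12 * x + 6) ∧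
    -- φ is continuous and convex on the domain
    ContinuousOn phiEx (Icc (-(5:ℝ)/3) (5/3)) ∧
    ConvexOn ℝ (Icc (-(5:ℝ)/3) (5/3)) phiEx ∧
    -- the max representation fails at x = 0
    phiEx 0 = 0 ∧
    max (max (11 * (0:ℝ) ^ 2 + 12 * 0 + 6) (5 * (0:ℝ) ^ 2))
        (11 * (0:ℝ) ^ 2 - 12 * 0 + 6) = 6 ∧
    phiEx 0 <
      max (max (11 * (0:ℝ) ^ 2 + 12 * 0 + 6) (5 * (0:ℝ) ^ 2))
        (11 * (0:ℝ) ^ 2 - 12 * 0 + 6) := by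
  refine ⟨?_, ?_, ?_, ?_, ?_, ?_, ?_, ?_⟩
  · intro x hx
    rw [phiEx, if_pos hx.2]
  · intro x hx
    rcases eq_or_lt_of_le hx.1 with h | h
    · rw [phiEx, if_pos (le_of_eq h.symm), ← h]; norm_num
    · rw [phiEx, if_neg (by linarith), if_pos hx.2]
  · intro x hx
    rcases eq_or_lt_of_le hx.1 with h | h
    · rw [phiEx, if_neg (by rw [← h]; norm_num), if_pos (le_of_eq h.symm), ← h]; norm_num
    · rw [phiEx, if_neg (by linarith), if_neg (by linarith)]
  · exact phiEx_cont.continuousOn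
  · exact phiEx_convex.subset (subset_univ _) (convex_Icc _ _)
  · rw [phiEx]; norm_num
  · norm_num
  · rw [phiEx]; norm_num
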